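/- Let (σ_m)_{m∈ℕ} be a sequence of nonnegative reals with σ_1 = sup_m σ_m > 0, and for L ∈ ℕ and k ∈ ℕ^L set σ_{L,k} := ∏_{ℓ=1}^L σ_{k_ℓ}. Then for all U ∈ ℕ_0 and s ∈ ℕ: ∑_{k ∈ ℕ^s, k_1 ≤ ⋯ ≤ k_s} σ_{s,k} ≤ σ_1^s · s^{2U} · (1 + 2U + ∑_{L=1}^s σ_1^{-L} ∑_{j ∈ ℕ^L, 2(U+1) ≤ j_1 ≤ ⋯ ≤ j_L} σ_{L,j}), with equality for U = 0. -/
import Mathlib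
open scoped ENNReal
open Finset

lemma downset_mem_iff {s : ℕ} (S : Finset (Fin s))
    (hS : ∀ ⦃i j : Fin s⦄, i ≤ j → j ∈ S → i ∈ S) (i : Fin s) :
    i ∈ S ↔ (i : ℕ) < S.card := by
  constructor
  · intro hi
    have h1 : Finset.Iic i ⊆ S := fun j hj => hS (Finset.mem_Iic.mp hj) hi
    have h2 := Finset.card_le_card h1
    rw [Fin.card_Iic] at h2
    omega
  · intro hi
    by_contra hmem
    have h2 : S ⊆ Finset.Iio i := by
      intro j hj
      rw [Finset.mem_Iio]
      by_contra hji
      exact hmem (hS (le_of_not_gt hji) hj)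
    have h3 := Finset.card_le_card h2
    rw [Fin.card_Iio] at h3
    omega

/-- gluing a low part and a high part -/
def glue (m s : ℕ) (a : Fin m → ℕ) (b : Fin (s - m) → ℕ) : Fin s → ℕ :=
  fun i => if h : (i : ℕ) < m then a ⟨i, h⟩ else b ⟨(i : ℕ) - m, by have := i.isLt; omega⟩

lemma glue_monotone {T m s : ℕ} {a : Fin m → ℕ} {b : Fin (s - m) → ℕ}
    (ha : Monotone a) (hb : Monotone b) (haT : ∀ i, a i < T) (hbT : ∀ i, T ≤ b i) :
    Monotone (glue m s a b) := by
  intro i j hij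
  have hij' : (i : ℕ) ≤ (j : ℕ) := hij
  unfold glue
  by_cases h1 : (i : ℕ) < m <;> by_cases h2 : (j : ℕ) < m <;> simp only [h1, h2, dif_pos, dif_neg, dite_true, dite_false]
  · exact ha (by simp [Fin.le_def, hij'])
  · exact le_of_lt (lt_of_lt_of_le (haT _) (hbT _))
  · omega
  · exact hb (by simp [Fin.le_def]; omega)

lemma glue_prod (σ : ℕ → ℝ≥0∞) {m s : ℕ} (hm : m ≤ s) (a : Fin m → ℕ) (b : Fin (s - m) → ℕ) :
    ∏ i, σ (glue m s a b i) = (∏ i, σ (a i)) * ∏ i, σ (b i) := by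
  have hms : m + (s - m) = s := by omega
  have h1 : ∏ i, σ (glue m s a b i) = ∏ i : Fin (m + (s - m)), σ (glue m s a b (finCongr hms i)) :=
    (Fintype.prod_equiv (finCongr hms) _ _ (fun i => rfl)).symm
  rw [h1, Fin.prod_univ_add]
  congr 1
  · apply Fintype.prod_congr
    intro i
    have : (i : ℕ) < m := i.isLt
    simp only [glue, finCongr_apply, Fin.coe_cast, Fin.coe_castAdd, this, dif_pos]
  · apply Fintype.prod_congr
    intro i
    have h2 : ¬ ((m + (i : ℕ)) < m) := by omega
    simp only [glue, finCongr_apply, Fin.coe_cast, Fin.coe_natAdd, h2, dif_neg, not_false_iff]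
    congr 1
    apply congrArg
    apply Fin.ext
    simp

lemma key_iff {T s : ℕ} {k : Fin s → ℕ} (hk : Monotone k) (i : Fin s) :
    k i < T ↔ (i : ℕ) < (Finset.univ.filter (fun i => k i < T)).card := by
  have := downset_mem_iff (Finset.univ.filter (fun i => k i < T))
    (fun i j hij hj => by
      simp only [Finset.mem_filter, Finset.mem_univ, true_and] at *
      exact lt_of_le_of_lt (hk hij) hj) i
  simpa using this

section fiber
variable (T s m : ℕ)

/-- count of low entries -/
def lowc {s : ℕ} (T : ℕ) (k : Fin s → ℕ) : ℕ := (Finset.univ.filter (fun i => k i < T)).card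

abbrev KK (s : ℕ) := {k : Fin s → ℕ // Monotone k ∧ ∀ i, 1 ≤ k i}
abbrev LowT (T m : ℕ) := {a : Fin m → ℕ // Monotone a ∧ ∀ i, 1 ≤ a i ∧ a i < T}
abbrev HighT (T L : ℕ) := {b : Fin L → ℕ // Monotone b ∧ ∀ i, T ≤ b i}

lemma card_filter_coe_lt (hm : m ≤ s) :
    (Finset.univ.filter (fun i : Fin s => (i : ℕ) < m)).card = m := by
  rw [Finset.card_bij' (fun (i : Fin s) hi => (⟨(i : ℕ), by simpa using hi⟩ : Fin m))
    (fun (j : Fin m) _ => (⟨(j : ℕ), lt_of_lt_of_le j.isLt hm⟩ : Fin s)) ?_ ?_ ?_ ?_]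
  · exact Finset.card_univ.trans (Fintype.card_fin m)
  · intro i hi; exact Finset.mem_univ _
  · intro j hj; simp [j.isLt]
  · intro i hi; apply Fin.ext; rfl
  · intro j hj; apply Fin.ext; rfl

def fiberEquiv (hT : 1 ≤ T) (hm : m ≤ s) :
    (LowT T m × HighT T (s - m)) ≃ {k : KK s // lowc T k.1 = m} where
  toFun p := by
    refine ⟨⟨glue m s p.1.1 p.2.1,
      glue_monotone p.1.2.1 p.2.2.1 (fun i => (p.1.2.2 i).2) p.2.2.2, ?_⟩, ?_⟩
    · intro i
      unfold glue
      by_cases h : (i : ℕ) < m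
      · simpa [h] using (p.1.2.2 _).1
      · simp only [h, dif_neg, not_false_iff]
        exact le_trans hT (p.2.2.2 _)
    · unfold lowc
      have : (Finset.univ.filter (fun i : Fin s => glue m s p.1.1 p.2.1 i < T))
          = Finset.univ.filter (fun i : Fin s => (i : ℕ) < m) := by
        apply Finset.filter_congr
        intro i _
        unfold glue
        by_cases h : (i : ℕ) < m
        · simp [h, (p.1.2.2 _).2]
        · simp only [h, dif_neg, not_false_iff, iff_false, not_lt]
          exact p.2.2.2 _
      rw [this, card_filter_coe_lt s m hm]
  invFun q :=
    (⟨fun i => q.1.1 ⟨(i : ℕ), lt_of_lt_of_le i.isLt hm⟩,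
      fun i j hij => q.1.2.1 (show (⟨(i:ℕ),_⟩ : Fin s) ≤ ⟨(j:ℕ),_⟩ from hij),
      fun i => ⟨q.1.2.2 _, by
        rw [key_iff q.1.2.1]
        exact lt_of_lt_of_le i.isLt (le_of_eq q.2.symm)⟩⟩,
     ⟨fun i => q.1.1 ⟨m + (i : ℕ), by have := i.isLt; omega⟩,
      fun i j hij => q.1.2.1 (show (⟨m + (i:ℕ),_⟩ : Fin s) ≤ ⟨m + (j:ℕ),_⟩ by
        simp only [Fin.mk_le_mk]; exact Nat.add_le_add_left hij m),
      fun i => by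
        by_contra h
        rw [not_le] at h
        have h2 : m + (i : ℕ) < lowc T q.1.1 := (key_iff q.1.2.1 _).mp h
        have h3 := q.2
        omega⟩)
  left_inv p := by
    ext i
    · show glue m s p.1.1 p.2.1 ⟨(i:ℕ), _⟩ = p.1.1 i
      unfold glue
      simp only [i.isLt, dif_pos]
    · show glue m s p.1.1 p.2.1 ⟨m + (i:ℕ), _⟩ = p.2.1 i
      unfold glue
      have h : ¬ (m + (i : ℕ) < m) := by omega
      simp only [h, dif_neg, not_false_iff]
      exact congrArg _ (Fin.ext (by simp))
  right_inv q := by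
    apply Subtype.ext
    apply Subtype.ext
    funext i
    show glue m s _ _ i = q.1.1 i
    unfold glue
    by_cases h : (i : ℕ) < m
    · simp only [h, dif_pos]
    · simp only [h, dif_neg, not_false_iff]
      exact congrArg q.1.1 (Fin.ext (show m + ((i:ℕ) - m) = (i : ℕ) by omega))

end fiber

lemma split (σ : ℕ → ℝ≥0∞) (T s : ℕ) (hT : 1 ≤ T) :
    ∑' k : KK s, ∏ i, σ (k.1 i)
      = ∑ m ∈ Finset.range (s + 1),
          (∑' a : LowT T m, ∏ i, σ (a.1 i)) * (∑' b : HighT T (s - m), ∏ i, σ (b.1 i)) := by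
  have h1 : ∑' k : KK s, ∏ i, σ (k.1 i)
      = ∑' (m : ℕ) (q : {k : KK s // lowc T k.1 = m}), ∏ i, σ (q.1.1 i) := by
    rw [← ENNReal.tsum_sigma]
    exact ((Equiv.sigmaFiberEquiv (fun k : KK s => lowc T k.1)).tsum_eq
      (fun k => ∏ i, σ (k.1 i))).symm
  rw [h1]
  rw [tsum_eq_sum (s := Finset.range (s + 1)) ?_]
  · apply Finset.sum_congr rfl
    intro m hm
    have hm' : m ≤ s := by simp at hm; omega
    rw [← (fiberEquiv T s m hT hm').tsum_eq (fun q => ∏ i, σ (q.1.1 i))]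
    have h2 : ∀ p : LowT T m × HighT T (s - m),
        (∏ i, σ (((fiberEquiv T s m hT hm') p).1.1 i))
          = (∏ i, σ (p.1.1 i)) * ∏ i, σ (p.2.1 i) := by
      intro p
      exact glue_prod σ hm' p.1.1 p.2.1
    calc ∑' p : LowT T m × HighT T (s - m), ∏ i, σ (((fiberEquiv T s m hT hm') p).1.1 i)
        = ∑' p : LowT T m × HighT T (s - m), (∏ i, σ (p.1.1 i)) * ∏ i, σ (p.2.1 i) := by
          exact tsum_congr h2
      _ = ∑' (a : LowT T m) (b : HighT T (s - m)), (∏ i, σ (a.1 i)) * ∏ i, σ (b.1 i) :=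
          ENNReal.tsum_prod (f := fun (a : LowT T m) (b : HighT T (s - m)) => (∏ i, σ (a.1 i)) * ∏ i, σ (b.1 i))
      _ = (∑' a : LowT T m, ∏ i, σ (a.1 i)) * (∑' b : HighT T (s - m), ∏ i, σ (b.1 i)) := by
          rw [← ENNReal.tsum_mul_right]
          exact tsum_congr (fun a => ENNReal.tsum_mul_left)
  · intro m hm
    have hm' : s < m := by simp at hm; omega
    have : IsEmpty {k : KK s // lowc T k.1 = m} := by
      constructor
      intro q
      have : lowc T q.1.1 ≤ s := le_trans (Finset.card_filter_le _ _) (by simp)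
      omega
    exact tsum_empty

lemma le_iff_card_le {m w : ℕ} {a : Fin m → ℕ} (ha : Monotone a) (i : Fin m) :
    a i ≤ w ↔ (i : ℕ) < (Finset.univ.filter (fun j => a j ≤ w)).card := by
  have := downset_mem_iff (Finset.univ.filter (fun j => a j ≤ w))
    (fun i j hij hj => by
      simp only [Finset.mem_filter, Finset.mem_univ, true_and] at *
      exact le_trans (ha hij) hj) i
  simpa using this

lemma jump_inj {W m : ℕ} {a a' : Fin m → ℕ} (ha : Monotone a) (ha' : Monotone a')
    (hb : ∀ i, 1 ≤ a i ∧ a i < W + 2) (hb' : ∀ i, 1 ≤ a' i ∧ a' i < W + 2)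
    (h : ∀ w, 1 ≤ w → w ≤ W →
      (Finset.univ.filter (fun j => a j ≤ w)).card
        = (Finset.univ.filter (fun j => a' j ≤ w)).card) : a = a' := by
  funext i
  have key : ∀ w, 1 ≤ w → w ≤ W → (a i ≤ w ↔ a' i ≤ w) := by
    intro w h1 h2
    rw [le_iff_card_le ha, le_iff_card_le ha', h w h1 h2]
  by_contra hne
  rcases Nat.lt_or_ge (a i) (a' i) with hlt | hge
  · have h1 : 1 ≤ a i := (hb i).1
    have h2 : a i ≤ W := by have := (hb' i).2; omega
    have := (key _ h1 h2).mp le_rfl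
    omega
  · have hlt : a' i < a i := by omega
    have h1 : 1 ≤ a' i := (hb' i).1
    have h2 : a' i ≤ W := by have := (hb i).2; omega
    have := (key _ h1 h2).mpr le_rfl
    omega

instance lowFinite (T m : ℕ) : Finite (LowT T m) := by
  apply Finite.of_injective (fun a : LowT T m => fun i => (⟨a.1 i, (a.2.2 i).2⟩ : Fin T))
  intro a a' h
  apply Subtype.ext
  funext i
  exact congrArg Fin.val (congrFun h i)

lemma low_card_le (W m : ℕ) : Nat.card (LowT (W + 2) m) ≤ (m + 1) ^ W := by
  have hinj : Function.Injective (fun a : LowT (W + 2) m =>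
      fun v : Fin W => (⟨(Finset.univ.filter (fun j => a.1 j ≤ (v : ℕ) + 1)).card,
        Nat.lt_succ_of_le (le_trans (Finset.card_filter_le _ _) (by simp))⟩ : Fin (m + 1))) := by
    intro a a' h
    apply Subtype.ext
    refine jump_inj a.2.1 a'.2.1 a.2.2 a'.2.2 ?_
    intro w h1 h2
    have := congrFun h ⟨w - 1, by omega⟩
    have h3 := congrArg Fin.val this
    simp only at h3
    have hw : w - 1 + 1 = w := by omega
    rwa [hw] at h3
  calc Nat.card (LowT (W + 2) m) ≤ Nat.card (Fin W → Fin (m + 1)) :=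
        Nat.card_le_card_of_injective _ hinj
    _ = (m + 1) ^ W := by simp [Nat.card_eq_fintype_card]

lemma low_card_le' (W m : ℕ) (hm : 1 ≤ m) :
    Nat.card (LowT (W + 2) m) ≤ (W + 1) * m ^ W := by
  have hinj : Function.Injective (fun a : LowT (W + 2) m =>
      ((⟨a.1 ⟨0, by omega⟩ - 1, by have := (a.2.2 ⟨0, by omega⟩).2; omega⟩ : Fin (W + 1)),
       fun v : Fin W => (⟨(Finset.univ.filter
          (fun j : Fin (m - 1) => a.1 ⟨(j : ℕ) + 1, by have := j.isLt; omega⟩ ≤ (v : ℕ) + 1)).card,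
        Nat.lt_succ_of_le (le_trans (Finset.card_filter_le _ _) (by simp))⟩ : Fin ((m - 1) + 1)))) := by
    intro a a' h
    have h1 := congrArg Fin.val (congrArg Prod.fst h)
    have h2 := congrArg Prod.snd h
    simp only at h1 h2
    apply Subtype.ext
    have htail : (fun j : Fin (m-1) => a.1 ⟨(j : ℕ) + 1, by have := j.isLt; omega⟩)
        = (fun j : Fin (m-1) => a'.1 ⟨(j : ℕ) + 1, by have := j.isLt; omega⟩) := by
      refine jump_inj (W := W) ?_ ?_ ?_ ?_ ?_
      · intro i j hij
        exact a.2.1 (show (⟨(i:ℕ)+1,_⟩ : Fin m) ≤ ⟨(j:ℕ)+1,_⟩ by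
          simp only [Fin.mk_le_mk]; omega)
      · intro i j hij
        exact a'.2.1 (show (⟨(i:ℕ)+1,_⟩ : Fin m) ≤ ⟨(j:ℕ)+1,_⟩ by
          simp only [Fin.mk_le_mk]; omega)
      · intro i; exact a.2.2 _
      · intro i; exact a'.2.2 _
      · intro w hw1 hw2
        have := congrFun h2 ⟨w - 1, by omega⟩
        have h3 := congrArg Fin.val this
        simp only at h3
        have hww : w - 1 + 1 = w := by omega
        rwa [hww] at h3
    funext i
    rcases Nat.eq_zero_or_pos (i : ℕ) with h0 | h0
    · have hi : i = ⟨0, by omega⟩ := Fin.ext h0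
      rw [hi]
      have ha1 := (a.2.2 ⟨0, by omega⟩).1
      have ha1' := (a'.2.2 ⟨0, by omega⟩).1
      omega
    · have hi : i = ⟨((i : ℕ) - 1) + 1, by have := i.isLt; omega⟩ := Fin.ext (show (i : ℕ) = (i : ℕ) - 1 + 1 by omega)
      rw [hi]
      exact congrFun htail ⟨(i : ℕ) - 1, by have := i.isLt; omega⟩
  calc Nat.card (LowT (W + 2) m) ≤ Nat.card (Fin (W + 1) × (Fin W → Fin ((m - 1) + 1))) :=
        Nat.card_le_card_of_injective _ hinj
    _ = (W + 1) * m ^ W := by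
        rw [show (m - 1) + 1 = m by omega]
        simp [Nat.card_eq_fintype_card]

lemma high_zero (σ : ℕ → ℝ≥0∞) (T : ℕ) : ∑' b : HighT T 0, ∏ i, σ (b.1 i) = 1 := by
  have b0 : HighT T 0 := ⟨fun i => i.elim0, fun i => i.elim0, fun i => i.elim0⟩
  rw [tsum_eq_single b0 (fun b' hb' => absurd (Subtype.ext (funext fun i => i.elim0)) hb')]
  simp

lemma low_two (σ : ℕ → ℝ≥0∞) (m : ℕ) : ∑' a : LowT 2 m, ∏ i, σ (a.1 i) = σ 1 ^ m := by
  rw [tsum_eq_single (⟨fun _ => 1, monotone_const, fun i => ⟨le_refl 1, one_lt_two⟩⟩ : LowT 2 m)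
    (fun a' ha' => absurd
      (Subtype.ext (funext fun i => show a'.1 i = 1 by have := a'.2.2 i; omega)) ha')]
  simp

lemma low_le (σ : ℕ → ℝ≥0∞) (hsup : ∀ m, 1 ≤ m → σ m ≤ σ 1) (T m : ℕ) :
    ∑' a : LowT T m, ∏ i, σ (a.1 i) ≤ (Nat.card (LowT T m) : ℝ≥0∞) * σ 1 ^ m := by
  haveI := Fintype.ofFinite (LowT T m)
  rw [tsum_fintype]
  calc ∑ a : LowT T m, ∏ i, σ (a.1 i) ≤ ∑ _a : LowT T m, σ 1 ^ m := by
        apply Finset.sum_le_sum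
        intro a _
        calc ∏ i, σ (a.1 i) ≤ ∏ _i : Fin m, σ 1 :=
              Finset.prod_le_prod' (fun i _ => hsup _ (a.2.2 i).1)
          _ = σ 1 ^ m := by simp
    _ = (Nat.card (LowT T m) : ℝ≥0∞) * σ 1 ^ m := by
        rw [Finset.sum_const, nsmul_eq_mul, Finset.card_univ, Nat.card_eq_fintype_card]

lemma reindex (g : ℕ → ℝ≥0∞) (s : ℕ) :
    ∑ m ∈ Finset.range s, g m = ∑ L ∈ Finset.Icc 1 s, g (s - L) := by
  apply Finset.sum_bij' (fun m _ => s - m) (fun L _ => s - L)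
  · intro m hm; simp at hm ⊢; omega
  · intro L hL; simp at hL ⊢; omega
  · intro m hm; simp at hm ⊢; omega
  · intro L hL; simp at hL ⊢; omega
  · intro m hm; simp at hm; congr 1; omega

lemma pow_sub_eq (x : ℝ≥0∞) (hx0 : x ≠ 0) (hxt : x ≠ ⊤) {L s : ℕ} (hL : L ≤ s) :
    x ^ (s - L) = x ^ s * x⁻¹ ^ L := by
  rw [← ENNReal.inv_pow, show s = (s - L) + L by omega, pow_add, mul_assoc,
    ENNReal.mul_inv_cancel (pow_ne_zero _ hx0) (ENNReal.pow_ne_top hxt), mul_one]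
  congr 1
  omega

lemma low_card_le2 (U m : ℕ) : Nat.card (LowT (2 * (U + 1)) m) ≤ (m + 1) ^ (2 * U) := by
  have h : 2 * (U + 1) = 2 * U + 2 := by ring
  rw [h]
  exact low_card_le (2 * U) m

lemma low_card_le2' (U m : ℕ) (hm : 1 ≤ m) :
    Nat.card (LowT (2 * (U + 1)) m) ≤ (2 * U + 1) * m ^ (2 * U) := by
  have h : 2 * (U + 1) = 2 * U + 2 := by ring
  rw [h]
  exact low_card_le' (2 * U) m hm

/-- Technical bound on sums over non-decreasing multi-indices (read in the
extended nonnegative reals), with equality for `U = 0`. -/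
theorem nondecreasing_multiindex_sum_bound (σ : ℕ → ℝ≥0∞)
    (hfin : ∀ m, σ m ≠ ⊤) (hsup : ∀ m, 1 ≤ m → σ m ≤ σ 1) (hpos : 0 < σ 1)
    (U s : ℕ) (hs : 1 ≤ s) :
    (∑' k : {k : Fin s → ℕ // Monotone k ∧ ∀ i, 1 ≤ k i}, ∏ i, σ (k.1 i))
      ≤ σ 1 ^ s * (s : ℝ≥0∞) ^ (2 * U) *
          ((1 : ℝ≥0∞) + 2 * U +
            ∑ L ∈ Finset.Icc 1 s, (σ 1)⁻¹ ^ L *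
              ∑' j : {j : Fin L → ℕ // Monotone j ∧ ∀ i, 2 * (U + 1) ≤ j i},
                ∏ i, σ (j.1 i)) ∧
    (U = 0 →
      (∑' k : {k : Fin s → ℕ // Monotone k ∧ ∀ i, 1 ≤ k i}, ∏ i, σ (k.1 i))
        = σ 1 ^ s * (s : ℝ≥0∞) ^ (2 * U) *
            ((1 : ℝ≥0∞) + 2 * U +
              ∑ L ∈ Finset.Icc 1 s, (σ 1)⁻¹ ^ L *
                ∑' j : {j : Fin L → ℕ // Monotone j ∧ ∀ i, 2 * (U + 1) ≤ j i},
                  ∏ i, σ (j.1 i))) := by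
  have hσ0 : σ 1 ≠ 0 := hpos.ne'
  have hσt : σ 1 ≠ ⊤ := hfin 1
  set T := 2 * (U + 1) with hTdef
  have hT1 : 1 ≤ T := by omega
  set Hi : ℕ → ℝ≥0∞ := fun L => ∑' b : HighT T L, ∏ i, σ (b.1 i) with hHi
  set Lo : ℕ → ℝ≥0∞ := fun m => ∑' a : LowT T m, ∏ i, σ (a.1 i) with hLo
  have hsplit : (∑' k : {k : Fin s → ℕ // Monotone k ∧ ∀ i, 1 ≤ k i}, ∏ i, σ (k.1 i))
      = (∑ m ∈ Finset.range s, Lo m * Hi (s - m)) + Lo s := by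
    rw [split σ T s hT1, Finset.sum_range_succ, Nat.sub_self]
    simp only [hHi, hLo, high_zero, mul_one]
  have hreindex : ∀ c : ℕ → ℝ≥0∞,
      (∑ m ∈ Finset.range s, c m * Hi (s - m))
        = ∑ L ∈ Finset.Icc 1 s, c (s - L) * Hi L := by
    intro c
    rw [reindex (fun m => c m * Hi (s - m)) s]
    apply Finset.sum_congr rfl
    intro L hL
    simp only [Finset.mem_Icc] at hL
    congr 2
    omega
  have hRHS : σ 1 ^ s * (s : ℝ≥0∞) ^ (2 * U) *
        ((1 : ℝ≥0∞) + 2 * U + ∑ L ∈ Finset.Icc 1 s, (σ 1)⁻¹ ^ L * Hi L)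
      = (∑ L ∈ Finset.Icc 1 s, ((s : ℝ≥0∞) ^ (2 * U) * σ 1 ^ (s - L)) * Hi L)
          + ((1 : ℝ≥0∞) + 2 * U) * (s : ℝ≥0∞) ^ (2 * U) * σ 1 ^ s := by
    rw [mul_add, Finset.mul_sum, add_comm]
    congr 1
    · apply Finset.sum_congr rfl
      intro L hL
      simp only [Finset.mem_Icc] at hL
      rw [pow_sub_eq (σ 1) hσ0 hσt hL.2]
      ring
    · ring
  constructor
  · -- inequality
    rw [hsplit, hRHS, ← hreindex (fun m => (s : ℝ≥0∞) ^ (2 * U) * σ 1 ^ m)]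
    apply add_le_add
    · apply Finset.sum_le_sum
      intro m hm
      simp only [Finset.mem_range] at hm
      apply mul_le_mul' ?_ le_rfl
      calc Lo m ≤ (Nat.card (LowT T m) : ℝ≥0∞) * σ 1 ^ m := low_le σ hsup T m
        _ ≤ (((m + 1) ^ (2 * U) : ℕ) : ℝ≥0∞) * σ 1 ^ m := by
            apply mul_le_mul' _ le_rfl
            exact_mod_cast Nat.cast_le.mpr (low_card_le2 U m)
        _ ≤ (s : ℝ≥0∞) ^ (2 * U) * σ 1 ^ m := by
            apply mul_le_mul' _ le_rfl
            have h1 : ((m + 1 : ℕ) : ℝ≥0∞) ≤ ((s : ℕ) : ℝ≥0∞) := by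
              exact_mod_cast Nat.cast_le.mpr (show m + 1 ≤ s by omega)
            calc (((m + 1) ^ (2 * U) : ℕ) : ℝ≥0∞) = ((m + 1 : ℕ) : ℝ≥0∞) ^ (2 * U) := by
                  push_cast; ring
              _ ≤ (s : ℝ≥0∞) ^ (2 * U) := pow_le_pow_left' h1 _
    · calc Lo s ≤ (Nat.card (LowT T s) : ℝ≥0∞) * σ 1 ^ s := low_le σ hsup T s
        _ ≤ (((2 * U + 1) * s ^ (2 * U) : ℕ) : ℝ≥0∞) * σ 1 ^ s := by
            apply mul_le_mul' _ le_rfl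
            exact_mod_cast Nat.cast_le.mpr (low_card_le2' U s hs)
        _ = ((1 : ℝ≥0∞) + 2 * U) * (s : ℝ≥0∞) ^ (2 * U) * σ 1 ^ s := by
            push_cast
            ring
  · -- equality for U = 0
    intro hU
    subst hU
    have hLo2 : ∀ m, Lo m = σ 1 ^ m := fun m => low_two σ m
    rw [hsplit, hRHS, ← hreindex (fun m => (s : ℝ≥0∞) ^ (2 * 0) * σ 1 ^ m)]
    simp only [hLo2, pow_zero, one_mul, Nat.cast_zero, mul_zero, add_zero]
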